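/- Let N ≥ 1 be an integer and let R_N' be the positive root of (1+r)r^N - (1-r)^2 = 0. For every r with R_N' < r < 1 there exists a function f analytic on the open unit disk D with |f(z)| < 1 on D (one may take f(z) = (a-z)/(1-az) with a ∈ [0,1) close enough to 1) and a point z with |z| = r such that |f(z)|^2 + ∑_{k=N}^∞ |a_k| r^k > 1, where a_k are the Taylor coefficients of f. Hence the radius R_N' is best possible. -/

import Mathlib

open Metric

set_option maxHeartbeats 1000000 in
/-- Theorem 1, sharpness of the radius `R_N'`: if `R` is the root in `(0,1)` of
`(1+r)r^N = (1-r)^2`, then for every `r` with `R < r < 1` there is an analytic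
self-map of the disk violating the inequality `|f(z)|^2 + ∑_{k=N}^∞ |a_k| r^k ≤ 1`
at radius `r`. -/
theorem bohr_rogosinski_radius_sq_sharp (N : ℕ) (hN : 1 ≤ N)
    (R : ℝ) (hR : R ∈ Set.Ioo (0:ℝ) 1)
    (hroot : (1 + R) * R ^ N = (1 - R) ^ 2)
    (r : ℝ) (hrR : R < r) (hr1 : r < 1) :
    ∃ (f : ℂ → ℂ) (a : ℕ → ℂ),
      AnalyticOn ℂ f (ball (0:ℂ) 1) ∧
      (∀ z ∈ ball (0:ℂ) 1, HasSum (fun k : ℕ => a k * z ^ k) (f z)) ∧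
      (∀ z ∈ ball (0:ℂ) 1, ‖f z‖ < 1) ∧
      ∃ z : ℂ, ‖z‖ = r ∧
        1 < (‖f z‖) ^ 2 + ∑' k : ℕ, ‖a (N + k)‖ * r ^ (N + k) := by
  obtain ⟨M, rfl⟩ : ∃ M, N = M + 1 := ⟨N - 1, (Nat.succ_pred_eq_of_pos hN).symm⟩
  obtain ⟨hR0, hR1⟩ := hR
  have hr0 : 0 < r := lt_trans hR0 hrR
  -- step 1 : the strict inequality at radius r
  have h1 : (1 - r) ^ 2 < (1 + r) * r ^ (M + 1) := by
    have hRN : R ^ (M + 1) < r ^ (M + 1) := pow_lt_pow_left₀ hrR hR0.le (by omega)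
    have hRp : (0:ℝ) < R ^ (M + 1) := pow_pos hR0 _
    nlinarith [hroot]
  have hg1 : (0:ℝ) < r ^ (M + 1) * (1 + r) ^ 2 - (1 - r ^ 2) * (1 - r) := by
    nlinarith [h1]
  -- step 2 : choose a close to 1
  set g : ℝ → ℝ := fun a => a ^ M * r ^ (M + 1) * (1 + a * r) ^ 2 - (1 - r ^ 2) * (1 - a * r)
    with hgdef
  have hcont : ContinuousAt g 1 := by fun_prop
  have hg1' : 0 < g 1 := by simp only [hgdef, one_pow, one_mul]; nlinarith [hg1]
  have hev : ∀ᶠ a in nhdsWithin 1 (Set.Iio 1), 0 < g a :=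
    (hcont.eventually (eventually_gt_nhds hg1')).filter_mono nhdsWithin_le_nhds
  have hev2 : ∀ᶠ a in nhdsWithin 1 (Set.Iio 1), (1/2 : ℝ) < a :=
    (eventually_gt_nhds (by norm_num : (1/2:ℝ) < 1)).filter_mono nhdsWithin_le_nhds
  have hev3 : ∀ᶠ a in nhdsWithin (1:ℝ) (Set.Iio 1), a < 1 :=
    eventually_mem_nhdsWithin.mono fun x hx => hx
  obtain ⟨a, hga, ha2, ha1⟩ := (hev.and (hev2.and hev3)).exists
  have ha0 : (0:ℝ) < a := by linarith
  have har : a * r < 1 := by nlinarith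
  have har0 : (0:ℝ) ≤ a * r := by positivity
  -- the function and its coefficients
  set f : ℂ → ℂ := fun z => ((a:ℂ) - z) / (1 - (a:ℂ) * z) with hfdef
  set c : ℕ → ℂ := fun k => if k = 0 then (a:ℂ) else -(1 - (a:ℂ)^2) * (a:ℂ)^(k-1) with hcdef
  have habs_a : ‖(a:ℂ)‖ = a := by
    rw [Complex.norm_real, Real.norm_eq_abs, abs_of_pos ha0]
  have hden : ∀ z ∈ ball (0:ℂ) 1, (1:ℂ) - (a:ℂ) * z ≠ 0 := by
    intro z hz
    rw [mem_ball_zero_iff] at hz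
    have haz : ‖(a:ℂ) * z‖ < 1 := by
      rw [norm_mul, habs_a]
      calc a * ‖z‖ ≤ 1 * ‖z‖ := by
            exact mul_le_mul_of_nonneg_right ha1.le (norm_nonneg z)
        _ < 1 := by simpa using hz
    intro h
    have : (a:ℂ) * z = 1 := by linear_combination -h
    rw [this] at haz
    simp at haz
  refine ⟨f, c, ?_, ?_, ?_, ?_⟩
  · -- analyticity
    have : AnalyticOnNhd ℂ f (ball (0:ℂ) 1) := by
      exact AnalyticOnNhd.div (analyticOnNhd_const.sub (analyticOnNhd_id))
        (analyticOnNhd_const.sub (analyticOnNhd_const.mul analyticOnNhd_id)) hden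
    exact this.analyticOn
  · -- power series
    intro z hz
    have hd := hden z hz
    rw [mem_ball_zero_iff] at hz
    have haz : ‖(a:ℂ) * z‖ < 1 := by
      rw [norm_mul]
      calc ‖(a:ℂ)‖ * ‖z‖ ≤ 1 * ‖z‖ := by
            apply mul_le_mul_of_nonneg_right _ (norm_nonneg z)
            show ‖(a:ℂ)‖ ≤ 1
            rw [habs_a]; exact ha1.le
        _ < 1 := by simpa using hz
    have hgeo : HasSum (fun k : ℕ => ((a:ℂ) * z) ^ k) (1 - (a:ℂ) * z)⁻¹ :=
      hasSum_geometric_of_norm_lt_one haz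
    have h2 := hgeo.mul_left (-(1 - (a:ℂ)^2) * z)
    have h3 : HasSum (fun n : ℕ => c (n + 1) * z ^ (n + 1))
        (-(1 - (a:ℂ)^2) * z * (1 - (a:ℂ) * z)⁻¹) := by
      have hfun : (fun n : ℕ => c (n + 1) * z ^ (n + 1)) =
          fun i : ℕ => -(1 - (a:ℂ)^2) * z * ((a:ℂ) * z) ^ i := by
        funext k
        simp only [hcdef, Nat.add_sub_cancel, if_neg (Nat.succ_ne_zero k)]
        rw [mul_pow]
        ring
      rw [hfun]; exact h2
    have h4 : -(1 - (a:ℂ)^2) * z * (1 - (a:ℂ) * z)⁻¹ =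
        f z - ∑ i ∈ Finset.range 1, c i * z ^ i := by
      simp only [Finset.range_one, Finset.sum_singleton, pow_zero, mul_one, hcdef,
        if_pos rfl, hfdef, ↓reduceIte]
      field_simp
      ring
    rw [h4] at h3
    exact (hasSum_nat_add_iff' 1).mp h3
  · -- modulus bound
    intro z hz
    have hd := hden z hz
    rw [mem_ball_zero_iff] at hz
    have hzabs : ‖z‖ < 1 := hz
    have hz2 : Complex.normSq z < 1 := by
      rw [← Complex.sq_norm]
      nlinarith [norm_nonneg z, hzabs]
    have h1 : Complex.normSq ((a:ℂ) - z) < Complex.normSq (1 - (a:ℂ) * z) := by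
      have key : Complex.normSq (1 - (a:ℂ) * z) - Complex.normSq ((a:ℂ) - z)
          = (1 - a^2) * (1 - Complex.normSq z) := by
        simp only [Complex.normSq_apply, Complex.sub_re, Complex.sub_im, Complex.mul_re,
          Complex.mul_im, Complex.ofReal_re, Complex.ofReal_im, Complex.one_re,
          Complex.one_im]
        ring
      have hp : 0 < (1 - a^2) * (1 - Complex.normSq z) :=
        mul_pos (by nlinarith) (by linarith)
      linarith
    have hpos : 0 < ‖1 - (a:ℂ) * z‖ := norm_pos_iff.mpr hd
    rw [hfdef]
    simp only [norm_div]
    rw [div_lt_one hpos]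
    rw [Complex.norm_def, Complex.norm_def]
    exact Real.sqrt_lt_sqrt (Complex.normSq_nonneg _) h1
  · -- the witness point
    refine ⟨(-r : ℝ), ?_, ?_⟩
    · rw [Complex.norm_real, Real.norm_eq_abs, abs_of_neg (by linarith), neg_neg]
    · have hfz : f ((-r : ℝ) : ℂ) = (((a + r) / (1 + a * r) : ℝ) : ℂ) := by
        simp only [hfdef]
        have e1 : ((a:ℂ) - ((-r:ℝ):ℂ)) = ((a:ℂ) + (r:ℂ)) := by push_cast; ring
        have e2 : ((1:ℂ) - (a:ℂ) * ((-r:ℝ):ℂ)) = (1 + (a:ℂ) * (r:ℂ)) := by push_cast; ring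
        rw [e1, e2]
        push_cast
        ring
      have habsf : ‖f ((-r : ℝ) : ℂ)‖ = (a + r) / (1 + a * r) := by
        rw [hfz, Complex.norm_real, Real.norm_eq_abs, abs_of_pos (by positivity)]
      -- the tail sum
      have hterm : ∀ k : ℕ, ‖c (M + 1 + k)‖ * r ^ (M + 1 + k)
          = ((1 - a^2) * a^M * r^(M+1)) * (a * r) ^ k := by
        intro k
        have hne : M + 1 + k ≠ 0 := by omega
        have hsub : M + 1 + k - 1 = M + k := by omega
        simp only [hcdef, if_neg hne, hsub]
        have : (-(1 - (a:ℂ)^2) * (a:ℂ)^(M+k)) = (((-(1 - a^2) * a^(M+k)) : ℝ) : ℂ) := by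
          push_cast; ring
        have hprod : (0:ℝ) < (1 - a^2) * a^(M+k) :=
          mul_pos (by nlinarith) (pow_pos ha0 (M+k))
        have hle : (-(1 - a^2) * a^(M+k) : ℝ) ≤ 0 := by nlinarith
        rw [this, Complex.norm_real, Real.norm_eq_abs, abs_of_nonpos hle]
        rw [pow_add, pow_add, mul_pow]
        ring
      set C : ℝ := (1 - a^2) * a^M * r^(M+1) with hCdef
      have hsum : HasSum (fun k : ℕ => ‖c (M + 1 + k)‖ * r ^ (M + 1 + k))
          (C * (1 - a * r)⁻¹) := by
        have := (hasSum_geometric_of_lt_one har0 har).mul_left C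
        rw [show (fun k : ℕ => ‖c (M + 1 + k)‖ * r ^ (M + 1 + k))
          = fun k : ℕ => C * (a * r) ^ k from funext hterm]
        simpa [div_eq_mul_inv] using this
      rw [habsf, hsum.tsum_eq]
      have harpos : (0:ℝ) < 1 - a * r := by linarith
      have key : ((a + r) / (1 + a * r))^2 + C * (1 - a * r)⁻¹ - 1
          = (1 - a^2) * (g a) / ((1 - a * r) * (1 + a * r)^2) := by
        rw [hgdef, hCdef]
        field_simp
        ring
      have hpos2 : 0 < (1 - a^2) * (g a) / ((1 - a * r) * (1 + a * r)^2) :=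
        div_pos (mul_pos (by nlinarith) hga) (by positivity)
      linarith [key, hpos2]
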